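/- Let m = 2g + 1 ≥ 3 be odd. Let d_1, …, d_{2g} be integers with ∑_{j=1}^{2g} d_j = 0, set q = ∑_{j : d_j < 0} (−d_j) and e_j = d_j + 2q (so every e_j ≥ 0). Assume ∑_{j=1}^{2g} e_j·(2j + [−2j]) = 6gq·m (this is the condition that the character γ_f attached to the monomial f = ∏_j x_j^{d_j} has constant weight ⟨γ_f⟩ = 6gq, which holds whenever f is a defining equation of the Mumford–Tate group of J_m). Then (2πi)^{−6gq} · ∏_{j=1}^{2g} (Γ(j/m)²·Γ([−2j]/m))^{e_j} = (−1)^{3gq} · m^{−3q} · ∏_{j=1}^{2g} (Γ(j/m)²·Γ([−2j]/m))^{d_j}. In particular, the Gamma-value Γ(γ_f) of the character γ_f differs from the Gamma-value Γ(f) of the monomial f by a nonzero rational factor. -/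

import Mathlib

def repZ (m : ℕ) (x : ℤ) : ℕ := (x % (m : ℤ)).toNat

lemma repZ_congr {m : ℕ} {x y : ℤ} (h : x ≡ y [ZMOD m]) : repZ m x = repZ m y := by
  unfold repZ; rw [Int.ModEq] at h; rw [h]

lemma repZ_cast {m : ℕ} (hm : 0 < m) (x : ℤ) : (repZ m x : ℤ) = x % m :=
  Int.toNat_of_nonneg (Int.emod_nonneg x (by positivity))

lemma repZ_lt {m : ℕ} (hm : 0 < m) (x : ℤ) : repZ m x < m := by
  have := Int.emod_lt_of_pos x (b := m) (by exact_mod_cast hm)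
  unfold repZ; omega

lemma repZ_of_lt {m : ℕ} (j : ℕ) (hj : j < m) : repZ m (j : ℤ) = j := by
  unfold repZ
  rw [Int.emod_eq_of_lt (by positivity) (by exact_mod_cast hj)]
  simp

lemma repZ_pos {m : ℕ} (hm : 0 < m) {x : ℤ} (hx : ¬ ((m : ℤ) ∣ x)) : 0 < repZ m x := by
  rcases Nat.eq_zero_or_pos (repZ m x) with h | h
  · exfalso; apply hx
    have := repZ_cast hm x
    rw [h] at this
    exact Int.dvd_of_emod_eq_zero this.symm
  · exact h

open Finset Complex Real

lemma one_sub_exp (z : ℂ) : 1 - Complex.exp (2 * z * I) = (-2 * I) * Complex.exp (z * I) * Complex.sin z := by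
  rw [Complex.sin, neg_mul]
  have e1 : Complex.exp (z * I) * Complex.exp (-(z * I)) = 1 := by
    rw [← Complex.exp_add, add_neg_cancel, Complex.exp_zero]
  have e2 : Complex.exp (z * I) * Complex.exp (z * I) = Complex.exp (2 * z * I) := by
    rw [← Complex.exp_add]; ring_nf
  have e3 : Complex.exp (-z * I) = Complex.exp (-(z * I)) := by rw [neg_mul]
  linear_combination (I^2) * e1 - (I^2) * e2 + (1 - Complex.exp (2*z*I)) * Complex.I_sq
    + (I^2 * Complex.exp (z*I)) * e3

lemma sum_Icc_cast (g : ℕ) : ∑ j ∈ Icc 1 (2*g), (j : ℂ) = (g : ℂ) * (2 * g + 1) := by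
  have : ∑ j ∈ Icc 1 (2*g), j = g * (2 * g + 1) := by
    induction g with
    | zero => simp
    | succ n ih =>
      rw [show 2*(n+1) = (2*n+1)+1 by ring, Finset.sum_Icc_succ_top (by omega),
        show 2*n+1 = (2*n)+1 by ring, Finset.sum_Icc_succ_top (by omega), ih]
      ring
  calc ∑ j ∈ Icc 1 (2*g), (j : ℂ) = ((∑ j ∈ Icc 1 (2*g), j : ℕ) : ℂ) := by push_cast; ring
    _ = _ := by rw [this]; push_cast; ring

lemma sin_prod (g : ℕ) :
    ∏ j ∈ Icc 1 (2*g), Complex.sin (π * j / ((2*g+1 : ℕ) : ℂ)) = ((2*g+1 : ℕ) : ℂ) / 4 ^ g := by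
  have hm : ((2*g+1 : ℕ) : ℂ) ≠ 0 := by exact_mod_cast Nat.succ_ne_zero (2*g)
  have hζ := Complex.isPrimitiveRoot_exp (2*g+1) (by omega)
  have key := hζ.prod_one_sub_pow_eq_order (n := 2*g)
  have hterm : ∀ k ∈ range (2*g), (1 - Complex.exp (2 * π * I / ((2*g+1:ℕ):ℂ)) ^ (k+1))
      = (-2 * I) * Complex.exp ((π * (k+1 : ℕ) / ((2*g+1:ℕ):ℂ)) * I)
        * Complex.sin (π * (k+1 : ℕ) / ((2*g+1:ℕ):ℂ)) := by
    intro k _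
    rw [← one_sub_exp, ← Complex.exp_nat_mul]
    congr 1
    push_cast
    ring
  rw [Finset.prod_congr rfl hterm] at key
  rw [Finset.prod_mul_distrib, Finset.prod_mul_distrib, Finset.prod_const, card_range,
    ← Complex.exp_sum] at key
  have hsum : ∑ k ∈ range (2*g), (π * ((k+1 : ℕ):ℂ) / ((2*g+1:ℕ):ℂ)) * I = π * g * I := by
    rw [← Finset.sum_mul, ← Finset.sum_div, ← Finset.mul_sum]
    have h1 : ∑ k ∈ range (2*g), ((k+1 : ℕ):ℂ) = ∑ j ∈ Icc 1 (2*g), (j : ℂ) := by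
      rw [← Finset.Ico_add_one_right_eq_Icc, Finset.sum_Ico_eq_sum_range]
      simp [add_comm]
    rw [h1, sum_Icc_cast]
    have h2 : ((2*g+1:ℕ):ℂ) = 2*(g:ℂ)+1 := by push_cast; ring
    rw [h2]
    have hm2 : (2*(g:ℂ)+1) ≠ 0 := by
      intro h; apply hm; rw [h2, h]
    field_simp
    have hm3 : (1 + (g:ℂ)*2) ≠ 0 := by rwa [add_comm, mul_comm] at hm2
    linear_combination (g:ℂ) * (mul_inv_cancel₀ hm3)
  rw [hsum] at key
  have hexp : Complex.exp ((π:ℂ) * g * I) = (-1 : ℂ)^g := by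
    rw [show (π:ℂ)*g*I = (g:ℕ)*((π:ℂ)*I) by push_cast; ring, Complex.exp_nat_mul,
      Complex.exp_pi_mul_I]
  have hpow : (-2 * I : ℂ)^(2*g) = (-4 : ℂ)^g := by
    rw [pow_mul]
    norm_num [mul_pow, Complex.I_sq]
  rw [hexp, hpow] at key
  have key2 : (4:ℂ)^g * ∏ j ∈ Icc 1 (2*g), Complex.sin (π * j / ((2*g+1:ℕ):ℂ))
      = ((2*g+1:ℕ):ℂ) := by
    have hprod : ∏ x ∈ range (2*g), Complex.sin (π * ((x+1:ℕ):ℂ) / ((2*g+1:ℕ):ℂ))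
        = ∏ j ∈ Icc 1 (2*g), Complex.sin (π * (j:ℂ) / ((2*g+1:ℕ):ℂ)) := by
      rw [← Finset.Ico_add_one_right_eq_Icc, Finset.prod_Ico_eq_prod_range]
      simp [add_comm]
    rw [← hprod]
    calc (4:ℂ)^g * ∏ x ∈ range (2*g), Complex.sin (π * ((x+1:ℕ):ℂ) / ((2*g+1:ℕ):ℂ))
        = (-4:ℂ)^g * (-1:ℂ)^g * ∏ x ∈ range (2*g), Complex.sin (π * ((x+1:ℕ):ℂ) / ((2*g+1:ℕ):ℂ)) := by
          rw [← mul_pow]; norm_num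
      _ = ((2*g:ℕ):ℂ) + 1 := key
      _ = ((2*g+1:ℕ):ℂ) := by push_cast; ring
  have h4 : (4:ℂ)^g ≠ 0 := pow_ne_zero _ (by norm_num)
  rw [eq_div_iff h4]
  linear_combination key2

lemma repZ_mod {m : ℕ} (hm : 0 < m) (x : ℤ) : ((repZ m x : ℤ)) ≡ x [ZMOD m] := by
  rw [repZ_cast hm]
  exact Int.emod_emod_of_dvd x dvd_rfl

lemma not_dvd_two_mul {g j : ℕ} (hj1 : 1 ≤ j) (hj2 : j ≤ 2*g) :
    ¬ (((2*g+1 : ℕ) : ℤ) ∣ -(2 * (j:ℤ))) := by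
  intro h
  rw [Int.dvd_neg] at h
  have hj : ((2*g+1 : ℕ) : ℤ) ∣ (j : ℤ) := by
    have h2 : ((2*g+1 : ℕ) : ℤ) ∣ 2 * (j:ℤ) * (g+1) := h.mul_right _
    have h3 : ((2*g+1 : ℕ) : ℤ) ∣ (j:ℤ) * ((2*g+1 : ℕ) : ℤ) := Dvd.intro_left _ rfl
    have := h2.sub h3
    have he : 2 * (j:ℤ) * (g+1) - (j:ℤ) * ((2*g+1 : ℕ) : ℤ) = (j:ℤ) := by push_cast; ring
    rwa [he] at this
  have := Int.le_of_dvd (by exact_mod_cast hj1) hj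
  omega
  
lemma not_dvd_g_mul {g i : ℕ} (hi1 : 1 ≤ i) (hi2 : i ≤ 2*g) :
    ¬ (((2*g+1 : ℕ) : ℤ) ∣ (g:ℤ) * (i:ℤ)) := by
  intro h
  have hj : ((2*g+1 : ℕ) : ℤ) ∣ (i : ℤ) := by
    have h2 : ((2*g+1 : ℕ) : ℤ) ∣ (g:ℤ) * (i:ℤ) * 2 := h.mul_right _
    have h3 : ((2*g+1 : ℕ) : ℤ) ∣ (i:ℤ) * ((2*g+1 : ℕ) : ℤ) := Dvd.intro_left _ rfl
    have := h3.sub h2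
    have he : (i:ℤ) * ((2*g+1 : ℕ) : ℤ) - (g:ℤ) * (i:ℤ) * 2 = (i:ℤ) := by push_cast; ring
    rwa [he] at this
  have := Int.le_of_dvd (by exact_mod_cast hi1) hj
  omega

lemma repZ_mem {g j : ℕ} (hj : j ∈ Icc 1 (2*g)) :
    repZ (2*g+1) (-(2 * (j:ℤ))) ∈ Icc 1 (2*g) := by
  rw [Finset.mem_Icc] at hj ⊢
  constructor
  · exact repZ_pos (by omega) (not_dvd_two_mul hj.1 hj.2)
  · have := repZ_lt (m := 2*g+1) (by omega) (-(2 * (j:ℤ)))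
    omega

lemma repZ_g_mem {g i : ℕ} (hi : i ∈ Icc 1 (2*g)) :
    repZ (2*g+1) ((g:ℤ) * (i:ℤ)) ∈ Icc 1 (2*g) := by
  rw [Finset.mem_Icc] at hi ⊢
  constructor
  · exact repZ_pos (by omega) (not_dvd_g_mul hi.1 hi.2)
  · have := repZ_lt (m := 2*g+1) (by omega) ((g:ℤ) * (i:ℤ))
    omega

lemma repZ_left_inv {g j : ℕ} (hj : j ∈ Icc 1 (2*g)) :
    repZ (2*g+1) ((g:ℤ) * (repZ (2*g+1) (-(2 * (j:ℤ))) : ℤ)) = j := by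
  rw [Finset.mem_Icc] at hj
  have hm : 0 < 2*g+1 := by omega
  have h1 : (g:ℤ) * (repZ (2*g+1) (-(2 * (j:ℤ))) : ℤ) ≡ (g:ℤ) * (-(2 * (j:ℤ))) [ZMOD (2*g+1 : ℕ)] :=
    (repZ_mod hm _).mul_left _
  rw [repZ_congr h1, repZ_congr (x := (g:ℤ) * (-(2 * (j:ℤ)))) (y := (j:ℤ)) ?_,
    repZ_of_lt j (by omega)]
  rw [Int.modEq_iff_dvd]
  exact ⟨(j:ℤ), by push_cast; ring⟩

lemma repZ_right_inv {g i : ℕ} (hi : i ∈ Icc 1 (2*g)) :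
    repZ (2*g+1) (-(2 * ((repZ (2*g+1) ((g:ℤ) * (i:ℤ))) : ℤ))) = i := by
  rw [Finset.mem_Icc] at hi
  have hm : 0 < 2*g+1 := by omega
  have h1 : -(2 * ((repZ (2*g+1) ((g:ℤ) * (i:ℤ))) : ℤ)) ≡ -(2 * ((g:ℤ) * (i:ℤ))) [ZMOD (2*g+1:ℕ)] :=
    ((repZ_mod hm _).mul_left 2).neg
  rw [repZ_congr h1, repZ_congr (x := -(2 * ((g:ℤ) * (i:ℤ)))) (y := (i:ℤ)) ?_,
    repZ_of_lt i (by omega)]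
  rw [Int.modEq_iff_dvd]
  exact ⟨(i:ℤ), by push_cast; ring⟩

lemma perm_prod (g : ℕ) (f : ℕ → ℂ) :
    ∏ j ∈ Icc 1 (2*g), f (repZ (2*g+1) (-(2 * (j:ℤ)))) = ∏ j ∈ Icc 1 (2*g), f j := by
  exact Finset.prod_nbij' (fun j => repZ (2*g+1) (-(2 * (j:ℤ))))
    (fun i => repZ (2*g+1) ((g:ℤ) * (i:ℤ)))
    (fun a ha => repZ_mem ha) (fun a ha => repZ_g_mem ha)
    (fun a ha => repZ_left_inv ha) (fun a ha => repZ_right_inv ha)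
    (fun a _ => rfl)

lemma Gamma_nat_div_ne_zero {k m : ℕ} (hk : 0 < k) (hm : 0 < m) :
    Complex.Gamma ((k:ℂ) / (m:ℂ)) ≠ 0 := by
  apply Complex.Gamma_ne_zero
  intro n
  have hcast : ((k:ℂ) / (m:ℂ)) = (((k:ℝ) / (m:ℝ) : ℝ) : ℂ) := by push_cast; ring
  rw [hcast, show (-(n:ℂ)) = ((-(n:ℝ) : ℝ) : ℂ) by push_cast; ring]
  intro h
  have h2 : (k:ℝ)/(m:ℝ) = -(n:ℝ) := by exact_mod_cast h
  have hpos : 0 < (k:ℝ)/(m:ℝ) := by positivity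
  have : (0:ℝ) ≤ (n:ℝ) := by positivity
  linarith [h2 ▸ hpos]

lemma gamma_prod_sq (g : ℕ) :
    (∏ j ∈ Icc 1 (2*g), Complex.Gamma ((j:ℂ) / ((2*g+1:ℕ):ℂ)))^2
      = (π:ℂ)^(2*g) * 4^g / ((2*g+1:ℕ):ℂ) := by
  have hm : ((2*g+1 : ℕ) : ℂ) ≠ 0 := by exact_mod_cast Nat.succ_ne_zero (2*g)
  have hrefl : ∏ j ∈ Icc 1 (2*g), Complex.Gamma ((j:ℂ) / ((2*g+1:ℕ):ℂ))
      = ∏ j ∈ Icc 1 (2*g), Complex.Gamma (((2*g+1-j : ℕ):ℂ) / ((2*g+1:ℕ):ℂ)) := by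
    refine Finset.prod_nbij' (fun j => 2*g+1-j) (fun j => 2*g+1-j) ?_ ?_ ?_ ?_ ?_ <;>
      intro a ha <;> simp only [Finset.mem_Icc] at ha ⊢ <;> try omega
    have h : 2*g+1-(2*g+1-a) = a := by omega
    rw [h]
  have hsq : (∏ j ∈ Icc 1 (2*g), Complex.Gamma ((j:ℂ) / ((2*g+1:ℕ):ℂ)))^2
      = ∏ j ∈ Icc 1 (2*g), ((π:ℂ) / Complex.sin (π * (j:ℂ) / ((2*g+1:ℕ):ℂ))) := by
    rw [sq]
    nth_rewrite 2 [hrefl]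
    rw [← Finset.prod_mul_distrib]
    refine Finset.prod_congr rfl ?_
    intro j hj
    rw [Finset.mem_Icc] at hj
    have h1 : ((2*g+1-j : ℕ):ℂ) / ((2*g+1:ℕ):ℂ) = 1 - (j:ℂ) / ((2*g+1:ℕ):ℂ) := by
      have : ((2*g+1-j : ℕ):ℂ) = ((2*g+1:ℕ):ℂ) - (j:ℂ) := by
        push_cast [Nat.cast_sub (by omega : j ≤ 2*g+1)]; ring
      rw [this]
      have hm' : (2*(g:ℂ)+1) ≠ 0 := by push_cast at hm; exact_mod_cast hm
      push_cast
      rw [sub_div, div_self hm']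
    rw [h1, Complex.Gamma_mul_Gamma_one_sub, mul_div_assoc]
  rw [hsq, Finset.prod_div_distrib, Finset.prod_const, Nat.card_Icc, sin_prod]
  rw [show 2*g+1-1 = 2*g by omega]
  rw [div_div_eq_mul_div]

lemma scalar_key (g q : ℕ) (m : ℂ) (hm : m ≠ 0) :
    (((π:ℂ)^(2*g) * 4^g / m)^3)^q
      = (2*(π:ℂ)*I)^(6*g*q) * ((-1:ℂ)^(3*g*q) * (m^(3*q))⁻¹) := by
  have hI6 : (Complex.I)^(6*g*q) = (-1:ℂ)^(3*g*q) := by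
    rw [show 6*g*q = 2*(3*g*q) by ring, pow_mul, Complex.I_sq]
  have hπ : (((π:ℂ)^(2*g))^(3*q)) = (π:ℂ)^(6*g*q) := by rw [← pow_mul]; congr 1; ring
  have h4 : (((4:ℂ)^g)^(3*q)) = (2:ℂ)^(6*g*q) := by
    rw [← pow_mul, show (4:ℂ) = 2^2 by norm_num, ← pow_mul]; congr 1; ring
  have hneg : ((-1:ℂ)^(3*g*q)) * ((-1:ℂ)^(3*g*q)) = 1 := by
    rw [← mul_pow]; norm_num
  rw [← pow_mul, div_pow, mul_pow, hπ, h4, mul_pow, mul_pow, hI6]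
  linear_combination (-(2:ℂ)^(6*g*q) * (π:ℂ)^(6*g*q) * (m^(3*q))⁻¹) * hneg

theorem gamma_value_of_character_eq_rat_mul_gamma_value
    (g : ℕ) (hg : 1 ≤ g) (d : ℕ → ℤ) (q : ℕ)
    (hsum : ∑ j ∈ Finset.Icc 1 (2 * g), d j = 0)
    (hq : (q : ℤ) = ∑ j ∈ (Finset.Icc 1 (2 * g)).filter (fun j => d j < 0), (-(d j)))
    (hweight : ∑ j ∈ Finset.Icc 1 (2 * g),
        (d j + 2 * (q : ℤ)) * (2 * (j : ℤ) + (repZ (2 * g + 1) (-(2 * (j : ℤ))) : ℤ))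
      = 6 * (g : ℤ) * (q : ℤ) * (2 * (g : ℤ) + 1)) :
    (2 * (Real.pi : ℂ) * Complex.I) ^ (-(6 * (g : ℤ) * (q : ℤ))) *
        ∏ j ∈ Finset.Icc 1 (2 * g),
          (Complex.Gamma ((j : ℂ) / ((2 * g + 1 : ℕ) : ℂ)) ^ 2 *
            Complex.Gamma ((repZ (2 * g + 1) (-(2 * (j : ℤ))) : ℂ) / ((2 * g + 1 : ℕ) : ℂ)))
            ^ (d j + 2 * (q : ℤ))
      = (-1 : ℂ) ^ (3 * g * q) * ((2 * g + 1 : ℕ) : ℂ) ^ (-(3 * (q : ℤ))) *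
        ∏ j ∈ Finset.Icc 1 (2 * g),
          (Complex.Gamma ((j : ℂ) / ((2 * g + 1 : ℕ) : ℂ)) ^ 2 *
            Complex.Gamma ((repZ (2 * g + 1) (-(2 * (j : ℤ))) : ℂ) / ((2 * g + 1 : ℕ) : ℂ)))
            ^ (d j) ∧
    ∃ r : ℚ, r ≠ 0 ∧
      (2 * (Real.pi : ℂ) * Complex.I) ^ (-(6 * (g : ℤ) * (q : ℤ))) *
        ∏ j ∈ Finset.Icc 1 (2 * g),
          (Complex.Gamma ((j : ℂ) / ((2 * g + 1 : ℕ) : ℂ)) ^ 2 *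
            Complex.Gamma ((repZ (2 * g + 1) (-(2 * (j : ℤ))) : ℂ) / ((2 * g + 1 : ℕ) : ℂ)))
            ^ (d j + 2 * (q : ℤ))
      = (r : ℂ) *
        ∏ j ∈ Finset.Icc 1 (2 * g),
          (Complex.Gamma ((j : ℂ) / ((2 * g + 1 : ℕ) : ℂ)) ^ 2 *
            Complex.Gamma ((repZ (2 * g + 1) (-(2 * (j : ℤ))) : ℂ) / ((2 * g + 1 : ℕ) : ℂ)))
            ^ (d j) := by
  have hm : ((2*g+1 : ℕ) : ℂ) ≠ 0 := by exact_mod_cast Nat.succ_ne_zero (2*g)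
  set G : ℕ → ℂ := fun j =>
    Complex.Gamma ((j : ℂ) / ((2 * g + 1 : ℕ) : ℂ)) ^ 2 *
      Complex.Gamma ((repZ (2 * g + 1) (-(2 * (j : ℤ))) : ℂ) / ((2 * g + 1 : ℕ) : ℂ)) with hG
  -- nonvanishing
  have hGne : ∀ j ∈ Icc 1 (2*g), G j ≠ 0 := by
    intro j hj
    rw [Finset.mem_Icc] at hj
    have h1 : Complex.Gamma ((j : ℂ) / ((2 * g + 1 : ℕ) : ℂ)) ≠ 0 :=
      Gamma_nat_div_ne_zero (by omega) (by omega)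
    have hk := repZ_mem (g := g) (j := j) (by rw [Finset.mem_Icc]; omega)
    rw [Finset.mem_Icc] at hk
    have h2 : Complex.Gamma (((repZ (2*g+1) (-(2*(j:ℤ))) : ℕ) : ℂ) / ((2 * g + 1 : ℕ) : ℂ)) ≠ 0 :=
      Gamma_nat_div_ne_zero (by omega) (by omega)
    exact mul_ne_zero (pow_ne_zero 2 h1) h2
  -- product of all G j, squared
  have hP := gamma_prod_sq g
  have hQ : (∏ j ∈ Icc 1 (2*g), G j)
      = ((π:ℂ)^(2*g) * 4^g / ((2*g+1:ℕ):ℂ)) *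
        ∏ j ∈ Icc 1 (2*g), Complex.Gamma ((j:ℂ) / ((2*g+1:ℕ):ℂ)) := by
    rw [hG, Finset.prod_mul_distrib, Finset.prod_pow, hP,
      perm_prod g (fun k => Complex.Gamma ((k:ℂ) / ((2*g+1:ℕ):ℂ)))]
  have hQsq : (∏ j ∈ Icc 1 (2*g), G j)^2 = ((π:ℂ)^(2*g) * 4^g / ((2*g+1:ℕ):ℂ))^3 := by
    rw [hQ, mul_pow, hP]
    ring
  -- split the zpow products
  have hsplit : ∏ j ∈ Icc 1 (2*g), G j ^ (d j + 2*(q:ℤ))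
      = (∏ j ∈ Icc 1 (2*g), G j ^ (d j)) * ((∏ j ∈ Icc 1 (2*g), G j)^2)^q := by
    calc ∏ j ∈ Icc 1 (2*g), G j ^ (d j + 2*(q:ℤ))
        = ∏ j ∈ Icc 1 (2*g), (G j ^ (d j) * G j ^ (2*q : ℕ)) := by
          refine Finset.prod_congr rfl ?_
          intro j hj
          rw [show d j + 2*(q:ℤ) = d j + ((2*q : ℕ) : ℤ) by push_cast; ring,
            zpow_add₀ (hGne j hj), zpow_natCast]
      _ = (∏ j ∈ Icc 1 (2*g), G j ^ (d j)) * ∏ j ∈ Icc 1 (2*g), G j ^ (2*q : ℕ) :=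
          Finset.prod_mul_distrib
      _ = (∏ j ∈ Icc 1 (2*g), G j ^ (d j)) * ((∏ j ∈ Icc 1 (2*g), G j)^2)^q := by
          rw [Finset.prod_pow, ← pow_mul]
  -- scalar bookkeeping
  have h2πI : (2*(π:ℂ)*Complex.I) ≠ 0 := by
    refine mul_ne_zero (mul_ne_zero two_ne_zero ?_) Complex.I_ne_zero
    exact_mod_cast Real.pi_ne_zero
  have hzpow1 : (2*(π:ℂ)*Complex.I) ^ (-(6 * (g : ℤ) * (q : ℤ)))
      = ((2*(π:ℂ)*Complex.I) ^ (6*g*q : ℕ))⁻¹ := by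
    rw [show (-(6 * (g:ℤ) * (q:ℤ))) = -((6*g*q : ℕ) : ℤ) by push_cast; ring,
      zpow_neg, zpow_natCast]
  have hzpow2 : ((2*g+1:ℕ):ℂ) ^ (-(3 * (q : ℤ))) = (((2*g+1:ℕ):ℂ) ^ (3*q : ℕ))⁻¹ := by
    rw [show (-(3 * (q:ℤ))) = -((3*q : ℕ) : ℤ) by push_cast; ring, zpow_neg, zpow_natCast]
  have hmain : (2 * (π : ℂ) * Complex.I) ^ (-(6 * (g : ℤ) * (q : ℤ))) *
      ∏ j ∈ Icc 1 (2*g), G j ^ (d j + 2*(q:ℤ))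
      = (-1 : ℂ) ^ (3 * g * q) * ((2 * g + 1 : ℕ) : ℂ) ^ (-(3 * (q : ℤ))) *
        ∏ j ∈ Icc 1 (2*g), G j ^ (d j) := by
    rw [hsplit, hQsq, scalar_key g q _ hm, hzpow1, hzpow2]
    have hne : (2*(π:ℂ)*Complex.I) ^ (6*g*q : ℕ) ≠ 0 := pow_ne_zero _ h2πI
    generalize ∏ j ∈ Icc 1 (2*g), G j ^ (d j) = A
    have hcancel : ∀ (B : ℂ), ((2*(π:ℂ)*Complex.I) ^ (6*g*q))⁻¹ *
        (A * ((2*(π:ℂ)*Complex.I) ^ (6*g*q) * B)) = A * B := by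
      intro B
      rw [mul_comm A, ← mul_assoc, ← mul_assoc, inv_mul_cancel₀ hne, one_mul]
      exact mul_comm B A
    rw [hcancel]
    ring
  refine ⟨hmain, (-1 : ℚ)^(3*g*q) / ((2*g+1 : ℕ) : ℚ)^(3*q), ?_, ?_⟩
  · apply div_ne_zero
    · exact pow_ne_zero _ (by norm_num)
    · exact pow_ne_zero _ (by exact_mod_cast Nat.succ_ne_zero (2*g))
  · rw [hmain]
    congr 1
    rw [hzpow2]
    push_cast
    ring
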